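/- The second derivative of SiLU(x) = x·e^x/(1+e^x) is bounded: |SiLU''(x)| ≤ 1/2 for all real x. -/

import Mathlib

noncomputable section
open Real

def SiLU (x : ℝ) : ℝ := x * Real.exp x / (1 + Real.exp x)

lemma denom_pos (x : ℝ) : 0 < 1 + Real.exp x := by positivity

lemma hasDerivAt_SiLU (x : ℝ) :
    HasDerivAt SiLU (Real.exp x * (1 + x + Real.exp x) / (1 + Real.exp x)^2) x := by
  have h1 : HasDerivAt (fun x : ℝ => x * Real.exp x) (1 * Real.exp x + x * Real.exp x) x :=
    (hasDerivAt_id x).mul (Real.hasDerivAt_exp x)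
  have h2 : HasDerivAt (fun x : ℝ => 1 + Real.exp x) (Real.exp x) x :=
    (Real.hasDerivAt_exp x).const_add 1
  have h := h1.div h2 (ne_of_gt (denom_pos x))
  refine h.congr_deriv ?_
  have hd := (denom_pos x).ne'
  field_simp
  try ring

lemma deriv_SiLU : deriv SiLU = fun x => Real.exp x * (1 + x + Real.exp x) / (1 + Real.exp x)^2 :=
  funext fun x => (hasDerivAt_SiLU x).deriv

lemma hasDerivAt_SiLU' (x : ℝ) :
    HasDerivAt (fun x => Real.exp x * (1 + x + Real.exp x) / (1 + Real.exp x)^2)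
      (Real.exp x * (2 * (1 + Real.exp x) + x * (1 - Real.exp x)) / (1 + Real.exp x)^3) x := by
  have h1 : HasDerivAt (fun x : ℝ => Real.exp x * (1 + x + Real.exp x))
      (Real.exp x * (1 + x + Real.exp x) + Real.exp x * (1 + Real.exp x)) x := by
    have := (Real.hasDerivAt_exp x).mul
      (((hasDerivAt_id x).const_add 1).add (Real.hasDerivAt_exp x))
    exact this.congr_deriv (by simp only [Pi.add_apply, id])
  have h2 : HasDerivAt (fun x : ℝ => (1 + Real.exp x)^2)
      (2 * (1 + Real.exp x) ^ 1 * Real.exp x) x :=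
    ((Real.hasDerivAt_exp x).const_add 1).pow 2
  have h := h1.div h2 (by positivity)
  refine h.congr_deriv ?_
  have hd := (denom_pos x).ne'
  field_simp
  try ring

theorem silu_second_deriv_bound (x : ℝ) : |deriv (deriv SiLU) x| ≤ 1 / 2 := by
  have hval : deriv (deriv SiLU) x
      = Real.exp x * (2 * (1 + Real.exp x) + x * (1 - Real.exp x)) / (1 + Real.exp x)^3 := by
    rw [deriv_SiLU]
    exact (hasDerivAt_SiLU' x).deriv
  rw [hval]
  set E := Real.exp x with hEdef
  have hE : 0 < E := Real.exp_pos x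
  have hD : 0 < (1 + E)^3 := by positivity
  -- key inequalities
  have ha : x + 1 ≤ E := Real.add_one_le_exp x
  have hb : (-x) + 1 ≤ Real.exp (-x) := Real.add_one_le_exp (-x)
  have hbe : Real.exp (-x) * E = 1 := by
    rw [hEdef, ← Real.exp_add]; simp
  have hb' : (1 - x) * E ≤ 1 := by nlinarith
  have hsign : 0 ≤ x * (E - 1) := by nlinarith
  have h2x : 2 * x ≤ E := by
    have h := Real.add_one_le_exp (x / 2)
    have he2 : Real.exp (x/2) * Real.exp (x/2) = E := by
      rw [hEdef, ← Real.exp_add]; ring_nf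
    nlinarith [Real.exp_pos (x/2), sq_nonneg (1 - x/2)]
  have h2x' : -2 * x * E ≤ 1 := by
    have h := Real.add_one_le_exp (-x / 2)
    have he2 : Real.exp (-x/2) * Real.exp (-x/2) = Real.exp (-x) := by
      rw [← Real.exp_add]; ring_nf
    have : 2 * (-x) ≤ Real.exp (-x) := by
      nlinarith [Real.exp_pos (-x/2), sq_nonneg (1 + x/2)]
    nlinarith
  rw [abs_le]
  constructor
  · rw [le_div_iff₀ hD]
    rcases le_or_gt 0 x with hx | hx
    · nlinarith [mul_nonneg hx hE.le, mul_nonneg (mul_nonneg hx hE.le) hE.le,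
        sq_nonneg (1 + E), mul_pos hE (mul_pos hE hE)]
    · nlinarith [mul_nonneg (neg_nonneg.2 hx.le) hE.le, sq_nonneg (1 + E),
        mul_pos hE hE]
  · rw [div_le_iff₀ hD]
    nlinarith [sq_nonneg (E - 1), mul_nonneg hsign hE.le, mul_pos hE hE]
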